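/- In the infinite-armed Bernoulli bandit model with arm means drawn i.i.d. from the uniform distribution on [0,1], consider one super-round of 1-failure m-run exploration with m = √n (n a perfect square): fresh arms are pulled in turn, each arm abandoned at its first failure, and exploration ends as soon as some arm produces m consecutive successes. For all sufficiently large n, the expected total number of pulls performed during exploration in the super-round is at most n − √n; hence over k such super-rounds the expected total number of exploration pulls is at most k·(n − √n), i.e., the exploration over k super-rounds amounts to at most k·(n − √n)/n full sequential passes of length n. -/

import Mathlib

open MeasureTheory ProbabilityTheory Filter

/-- The uniform probability measure on the real interval `[a, b]`
(Dirac measure at `a` in the degenerate case `a = b`). -/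
noncomputable def unifIcc (a b : ℝ) : Measure ℝ :=
  if a < b then (ENNReal.ofReal (b - a))⁻¹ • volume.restrict (Set.Icc a b)
  else Measure.dirac a

/-- Infinite-armed Bernoulli bandit model (canonical construction): the arm means
`means i`, `i : ℕ`, are i.i.d. random variables uniform on `[a, b]`, and, conditionally
on the means, the successive pulls of arm `i` are i.i.d. Bernoulli(`means i`) trials,
independent across arms; the pulls are realized by comparing i.i.d. uniform-`[0,1]`
seeds `seeds i t` (jointly independent of the means) with the corresponding mean. -/
structure BanditModel {Ω : Type*} [MeasurableSpace Ω] (μ : Measure Ω) (a b : ℝ) where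
  means : ℕ → Ω → ℝ
  seeds : ℕ → ℕ → Ω → ℝ
  meas_means : ∀ i, Measurable (means i)
  meas_seeds : ∀ i t, Measurable (seeds i t)
  law_means : ∀ i, μ.map (means i) = unifIcc a b
  law_seeds : ∀ i t, μ.map (seeds i t) = unifIcc 0 1
  indep : iIndepFun
      (Sum.elim means (fun it : ℕ × ℕ => seeds it.1 it.2)) μ

variable {Ω : Type*} [MeasurableSpace Ω] {μ : Measure Ω} {a b : ℝ}

/-- Outcome of the `t`-th pull of arm `i` (`true` = success, `false` = failure). -/
noncomputable def BanditModel.pull (B : BanditModel μ a b) (i t : ℕ) (ω : Ω) : Bool :=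
  decide (B.seeds i t ω ≤ B.means i ω)

/-- A strategy: an adaptive rule selecting the next arm to pull from the history of
(arm pulled, outcome observed) pairs so far. -/
abbrev Strategy := List (ℕ × Bool) → ℕ

/-- The history (chronological list of (arm, outcome) pairs) of the first `n` pulls
when playing strategy `σ` in the bandit model `B`. -/
noncomputable def BanditModel.hist (B : BanditModel μ a b) (σ : Strategy) :
    ℕ → Ω → List (ℕ × Bool)
  | 0, _ => []
  | n + 1, ω =>
      let h := B.hist σ n ω
      let i := σ h
      h ++ [(i, B.pull i (h.countP fun x => x.1 == i) ω)]

/-- Outcome of the `n`-th pull (counting from `0`) when playing strategy `σ`. -/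
noncomputable def BanditModel.outcome (B : BanditModel μ a b) (σ : Strategy)
    (n : ℕ) (ω : Ω) : Bool :=
  let h := B.hist σ n ω
  let i := σ h
  B.pull i (h.countP fun x => x.1 == i) ω

/-- `F n`: the number of failures among the first `n` pulls of strategy `σ`. -/
noncomputable def BanditModel.failures (B : BanditModel μ a b) (σ : Strategy)
    (n : ℕ) (ω : Ω) : ℕ :=
  ((Finset.range n).filter fun k => B.outcome σ k ω = false).card

/-- Total number of pulls performed during the exploration part of one super-round of
1-failure `m`-run exploration, using the fresh arms `e 0, e 1, e 2, …`: fresh arms are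
pulled in turn, each arm is abandoned at its first failure, and exploration ends as soon
as some arm produces `m` consecutive successes.  Each arm tried before the first "good"
arm contributes its pulls up to and including its first failure, and the good arm itself
contributes `m` pulls. -/
noncomputable def BanditModel.explorationPulls (B : BanditModel μ a b) (m : ℕ)
    (e : ℕ → ℕ) (ω : Ω) : ℕ :=
  let good := sInf {i | ∀ t < m, B.pull (e i) t ω = true}
  (∑ i ∈ Finset.range good, (sInf {t | B.pull (e i) t ω = false} + 1)) + m

section AuxProofs
open scoped ENNReal
namespace BanditProof

lemma unifIcc_eq_restrict : unifIcc 0 1 = volume.restrict (Set.Icc (0:ℝ) 1) := by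
  rw [unifIcc, if_pos (by norm_num : (0:ℝ) < 1)]
  norm_num

instance : IsProbabilityMeasure (unifIcc 0 1) := by
  rw [unifIcc_eq_restrict]
  constructor
  rw [Measure.restrict_apply_univ, Real.volume_Icc]
  norm_num

lemma unifIcc_Iic {p : ℝ} (h0 : 0 ≤ p) (h1 : p ≤ 1) :
    unifIcc 0 1 (Set.Iic p) = ENNReal.ofReal p := by
  rw [unifIcc_eq_restrict, Measure.restrict_apply measurableSet_Iic]
  have h : Set.Iic p ∩ Set.Icc 0 1 = Set.Icc 0 p := by
    ext x
    simp only [Set.mem_inter_iff, Set.mem_Iic, Set.mem_Icc]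
    constructor
    · rintro ⟨h, h', _⟩; exact ⟨h', h⟩
    · rintro ⟨h', h⟩; exact ⟨h, h', h.trans h1⟩
  rw [h, Real.volume_Icc, sub_zero]

lemma unifIcc_Ioi {p : ℝ} (h0 : 0 ≤ p) (h1 : p ≤ 1) :
    unifIcc 0 1 (Set.Ioi p) = ENNReal.ofReal (1 - p) := by
  rw [unifIcc_eq_restrict, Measure.restrict_apply measurableSet_Ioi]
  have h : Set.Ioi p ∩ Set.Icc 0 1 = Set.Ioc p 1 := by
    ext x
    simp only [Set.mem_inter_iff, Set.mem_Ioi, Set.mem_Icc, Set.mem_Ioc]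
    constructor
    · rintro ⟨h, _, h''⟩; exact ⟨h, h''⟩
    · rintro ⟨h, h''⟩; exact ⟨h, h0.trans h.le, h''⟩
  rw [h, Real.volume_Ioc]

theorem iIndepFun_precomp {Ω : Type*} [MeasurableSpace Ω] {μ : Measure Ω}
    {ι κ : Type*} {β : ι → Type*} {mβ : ∀ i, MeasurableSpace (β i)}
    {f : ∀ i, Ω → β i} (h : iIndepFun (m := mβ) f μ) {g : κ → ι} (hg : Function.Injective g) :
    iIndepFun (m := fun k => mβ (g k)) (fun k => f (g k)) μ := by
  classical
  rw [iIndepFun_iff] at h ⊢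
  intro s f' hf'
  set F' : ∀ _i : ι, Set Ω := fun j =>
    if hj : ∃ k ∈ s, g k = j then f' hj.choose else Set.univ with hF'
  have hFg : ∀ k ∈ s, F' (g k) = f' k := by
    intro k hk
    have hj : ∃ k' ∈ s, g k' = g k := ⟨k, hk, rfl⟩
    have h2 := hj.choose_spec
    have hkk : hj.choose = k := hg h2.2
    calc F' (g k) = f' hj.choose := dif_pos hj
    _ = f' k := by rw [hkk]
  have himg : μ (⋂ i ∈ s.image g, F' i) = ∏ i ∈ s.image g, μ (F' i) := by
    apply h
    intro j hj
    rcases Finset.mem_image.mp hj with ⟨k, hk, rfl⟩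
    rw [hFg k hk]
    exact hf' k hk
  have hIeq : (⋂ i ∈ s.image g, F' i) = ⋂ k ∈ s, f' k := by
    ext ω
    simp only [Set.mem_iInter, Finset.mem_image]
    constructor
    · intro hx k hk
      rw [← hFg k hk]
      exact hx (g k) ⟨k, hk, rfl⟩
    · rintro hx j ⟨k, hk, rfl⟩
      rw [hFg k hk]
      exact hx k hk
  have hPeq : (∏ i ∈ s.image g, μ (F' i)) = ∏ k ∈ s, μ (f' k) := by
    rw [Finset.prod_image (fun k _ k' _ hkk => hg hkk)]
    exact Finset.prod_congr rfl fun k hk => by rw [hFg k hk]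
  rw [← hIeq, ← hPeq]
  exact himg

theorem map_tuple_eq_pi {Ω : Type*} [MeasurableSpace Ω] {μ : Measure Ω}
    [IsProbabilityMeasure μ] {κ : Type*} [Fintype κ] {β : κ → Type*}
    [∀ k, MeasurableSpace (β k)] {f : ∀ k, Ω → β k}
    (h : iIndepFun f μ) (hf : ∀ k, Measurable (f k)) :
    μ.map (fun ω k => f k ω) = Measure.pi (fun k => μ.map (f k)) := by
  haveI : ∀ k, IsProbabilityMeasure (μ.map (f k)) :=
    fun k => Measure.isProbabilityMeasure_map (hf k).aemeasurable
  haveI : ∀ k, SigmaFinite (μ.map (f k)) := fun k => inferInstance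
  refine (Measure.pi_eq (μ := fun k => μ.map (f k)) fun s hs => ?_).symm
  rw [Measure.map_apply (measurable_pi_lambda _ hf) (MeasurableSet.univ_pi hs)]
  have hpre : (fun ω k => f k ω) ⁻¹' (Set.univ.pi s) = ⋂ k, f k ⁻¹' s k := by
    ext ω; simp [Set.mem_pi]
  rw [hpre, h.meas_iInter (fun k => ⟨s k, hs k, rfl⟩)]
  exact Finset.prod_congr rfl fun k _ => (Measure.map_apply (hf k) (hs k)).symm

end BanditProof
section PiComp
namespace BanditProof

variable (m : ℕ)

def succSet : Set (Option (Fin m) → ℝ) := {x | ∀ t : Fin m, x (some t) ≤ x none}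

def dSet (t : Fin m) : Set (Option (Fin m) → ℝ) :=
  {x | (∀ s : Fin m, (s : ℕ) < (t : ℕ) → x (some s) ≤ x none) ∧ x none < x (some t)}

lemma measurableSet_succSet : MeasurableSet (succSet m) := by
  have h : succSet m = ⋂ t : Fin m, {x | x (some t) ≤ x none} := by
    ext x; simp [succSet]
  rw [h]
  exact MeasurableSet.iInter fun t =>
    measurableSet_le (measurable_pi_apply _) (measurable_pi_apply _)

lemma measurableSet_dSet (t : Fin m) : MeasurableSet (dSet m t) := by
  have h : dSet m t = (⋂ s : Fin m, {x | (s : ℕ) < (t : ℕ) → x (some s) ≤ x none}) ∩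
      {x | x none < x (some t)} := by
    ext x; simp [dSet, Set.mem_iInter]
  rw [h]
  refine MeasurableSet.inter (MeasurableSet.iInter fun s => ?_)
    (measurableSet_lt (measurable_pi_apply _) (measurable_pi_apply _))
  by_cases hst : (s : ℕ) < (t : ℕ)
  · have : {x : Option (Fin m) → ℝ | (s : ℕ) < (t : ℕ) → x (some s) ≤ x none} =
        {x | x (some s) ≤ x none} := by ext x; simp [hst]
    rw [this]
    exact measurableSet_le (measurable_pi_apply _) (measurable_pi_apply _)
  · have : {x : Option (Fin m) → ℝ | (s : ℕ) < (t : ℕ) → x (some s) ≤ x none} =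
        Set.univ := by ext x; simp [hst]
    rw [this]
    exact MeasurableSet.univ

noncomputable def piU : Measure (Option (Fin m) → ℝ) :=
  Measure.pi (fun _ => unifIcc 0 1)

instance : IsProbabilityMeasure (piU m) := by
  unfold piU; infer_instance

def sec : (Fin m → ℝ) × ℝ → (Option (Fin m) → ℝ) :=
  fun yp k => k.elim yp.2 (fun t => yp.1 t)

lemma measurable_sec : Measurable (sec m) := by
  refine measurable_pi_lambda _ fun k => ?_
  cases k with
  | none => exact measurable_snd
  | some t => exact (measurable_pi_apply t).comp measurable_fst

lemma map_sec :
    ((Measure.pi fun _ : Fin m => unifIcc 0 1).prod (unifIcc 0 1)).map (sec m) = piU m := by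
  refine (Measure.pi_eq (μ := fun _ => unifIcc 0 1) fun s hs => ?_).symm
  rw [Measure.map_apply (measurable_sec m) (MeasurableSet.univ_pi hs)]
  have hpre : sec m ⁻¹' (Set.univ.pi s) = (Set.univ.pi fun t => s (some t)) ×ˢ s none := by
    ext ⟨y, p⟩
    simp only [Set.mem_preimage, Set.mem_pi, Set.mem_univ, forall_true_left, Set.mem_prod]
    constructor
    · intro h; exact ⟨fun t => h (some t), h none⟩
    · rintro ⟨h1, h2⟩ k
      cases k with
      | none => exact h2
      | some t => exact h1 t
  rw [hpre, Measure.prod_prod, Measure.pi_pi, Fintype.prod_option]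
  exact (mul_comm _ _).symm

lemma piU_apply {E : Set (Option (Fin m) → ℝ)} (hE : MeasurableSet E) :
    piU m E = ∫⁻ p in Set.Icc (0:ℝ) 1,
      (Measure.pi fun _ : Fin m => unifIcc 0 1) {y | sec m (y, p) ∈ E} := by
  rw [← map_sec, Measure.map_apply (measurable_sec m) hE,
    Measure.prod_apply_symm ((measurable_sec m) hE), unifIcc_eq_restrict]
  rfl

lemma piU_succSet : piU m (succSet m) = ENNReal.ofReal (1 / (m + 1)) := by
  rw [piU_apply m (measurableSet_succSet m)]
  have h1 : ∀ p ∈ Set.Icc (0:ℝ) 1,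
      (Measure.pi fun _ : Fin m => unifIcc 0 1) {y | sec m (y, p) ∈ succSet m} =
        ENNReal.ofReal (p ^ m) := by
    intro p hp
    have hset : {y : Fin m → ℝ | sec m (y, p) ∈ succSet m} =
        Set.univ.pi fun _ : Fin m => Set.Iic p := by
      ext y
      simp only [Set.mem_setOf_eq, succSet, sec, Set.mem_pi, Set.mem_univ, forall_true_left,
        Set.mem_Iic]
      exact ⟨fun h t => h t, fun h t => h t⟩
    rw [hset, Measure.pi_pi]
    simp only [unifIcc_Iic hp.1 hp.2, Finset.prod_const, Finset.card_univ, Fintype.card_fin]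
    rw [← ENNReal.ofReal_pow hp.1]
  rw [setLIntegral_congr_fun measurableSet_Icc (fun p hp => h1 p hp)]
  rw [← ofReal_integral_eq_lintegral_ofReal ((continuous_pow m).integrableOn_Icc)
    ((ae_restrict_iff' measurableSet_Icc).2 (ae_of_all _ fun x hx => pow_nonneg hx.1 m))]
  congr 1
  rw [MeasureTheory.integral_Icc_eq_integral_Ioc,
    ← intervalIntegral.integral_of_le (zero_le_one (α := ℝ)), integral_pow]
  norm_num

lemma piU_dSet (t : Fin m) :
    piU m (dSet m t) = ENNReal.ofReal (1 / ((t : ℕ) + 1) - 1 / ((t : ℕ) + 2)) := by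
  rw [piU_apply m (measurableSet_dSet m t)]
  have h1 : ∀ p ∈ Set.Icc (0:ℝ) 1,
      (Measure.pi fun _ : Fin m => unifIcc 0 1) {y | sec m (y, p) ∈ dSet m t} =
        ENNReal.ofReal (p ^ (t : ℕ) * (1 - p)) := by
    intro p hp
    have hset : {y : Fin m → ℝ | sec m (y, p) ∈ dSet m t} =
        Set.univ.pi fun s : Fin m =>
          if (s : ℕ) < (t : ℕ) then Set.Iic p else if (s : ℕ) = (t : ℕ) then Set.Ioi p
            else Set.univ := by
      ext y
      simp only [Set.mem_setOf_eq, dSet, sec, Set.mem_pi, Set.mem_univ, forall_true_left]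
      constructor
      · rintro ⟨hs, ht⟩ s
        by_cases h1 : (s : ℕ) < (t : ℕ)
        · simp only [if_pos h1]; exact hs s h1
        · by_cases h2 : (s : ℕ) = (t : ℕ)
          · have : s = t := Fin.ext h2
            subst this
            simp only [if_neg h1, if_pos h2]
            exact ht
          · rw [if_neg h1, if_neg h2]; trivial
      · intro h
        constructor
        · intro s hst
          have := h s
          rwa [if_pos hst] at this
        · have := h t
          rw [if_neg (lt_irrefl _), if_pos rfl] at this
          exact this
    rw [hset, Measure.pi_pi]
    set g : ℕ → ℝ≥0∞ := fun j => if j < (t : ℕ) then ENNReal.ofReal p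
          else if j = (t : ℕ) then ENNReal.ofReal (1 - p) else 1 with hg
    have hprod : ∀ s : Fin m, unifIcc 0 1
        (if (s : ℕ) < (t : ℕ) then Set.Iic p else if (s : ℕ) = (t : ℕ) then Set.Ioi p
          else Set.univ) = g (s : ℕ) := by
      intro s
      rw [hg]
      by_cases h1 : (s : ℕ) < (t : ℕ)
      · simp only [if_pos h1, unifIcc_Iic hp.1 hp.2]
      · by_cases h2 : (s : ℕ) = (t : ℕ)
        · simp only [if_neg h1, if_pos h2, unifIcc_Ioi hp.1 hp.2]
        · simp only [if_neg h1, if_neg h2, measure_univ]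
    rw [Finset.prod_congr rfl (fun s _ => hprod s), Fin.prod_univ_eq_prod_range g m]
    rw [← Finset.prod_range_mul_prod_Ico _ (Nat.succ_le_of_lt t.isLt)]
    have h2 : (∏ j ∈ Finset.Ico ((t : ℕ) + 1) m, g j) = 1 := by
      refine Finset.prod_eq_one fun j hj => ?_
      rcases Finset.mem_Ico.mp hj with ⟨hj1, _⟩
      show (if j < (t : ℕ) then ENNReal.ofReal p
        else if j = (t : ℕ) then ENNReal.ofReal (1 - p) else 1) = 1
      rw [if_neg (by omega), if_neg (by omega)]
    have hgt : g (t : ℕ) = ENNReal.ofReal (1 - p) := by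
      show (if (t : ℕ) < (t : ℕ) then ENNReal.ofReal p
        else if (t : ℕ) = (t : ℕ) then ENNReal.ofReal (1 - p) else 1) = ENNReal.ofReal (1 - p)
      rw [if_neg (lt_irrefl _), if_pos rfl]
    have h3 : (∏ j ∈ Finset.range (t : ℕ), g j) = ENNReal.ofReal p ^ (t : ℕ) := by
      have : ∀ j ∈ Finset.range (t : ℕ), g j = ENNReal.ofReal p := by
        intro j hj
        show (if j < (t : ℕ) then ENNReal.ofReal p
          else if j = (t : ℕ) then ENNReal.ofReal (1 - p) else 1) = ENNReal.ofReal p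
        rw [if_pos (Finset.mem_range.mp hj)]
      rw [Finset.prod_congr rfl this, Finset.prod_const, Finset.card_range]
    rw [h2, mul_one, Finset.prod_range_succ, hgt, h3,
      ← ENNReal.ofReal_pow hp.1, ← ENNReal.ofReal_mul (pow_nonneg hp.1 _)]
  rw [setLIntegral_congr_fun measurableSet_Icc (fun p hp => h1 p hp)]
  have hcont : Continuous fun p : ℝ => p ^ (t : ℕ) * (1 - p) :=
    (continuous_pow _).mul (continuous_const.sub continuous_id)
  rw [← ofReal_integral_eq_lintegral_ofReal (hcont.integrableOn_Icc)
    ((ae_restrict_iff' measurableSet_Icc).2 (ae_of_all _ fun x hx =>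
      mul_nonneg (pow_nonneg hx.1 _) (by linarith [hx.2])))]
  congr 1
  rw [MeasureTheory.integral_Icc_eq_integral_Ioc,
    ← intervalIntegral.integral_of_le (zero_le_one (α := ℝ))]
  have heq : ∀ x ∈ Set.uIcc (0:ℝ) 1, x ^ (t : ℕ) * (1 - x) = x ^ (t : ℕ) - x ^ ((t : ℕ) + 1) := by
    intro x _; ring
  rw [intervalIntegral.integral_congr heq, intervalIntegral.integral_sub
    (intervalIntegral.intervalIntegrable_pow _) (intervalIntegral.intervalIntegrable_pow _),
    integral_pow, integral_pow]
  push_cast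
  ring_nf

end BanditProof
end PiComp

end AuxProofs
section ArmsProofs
open scoped ENNReal
namespace BanditProof

variable {Ω : Type*} [MeasurableSpace Ω] {μ : Measure Ω}

noncomputable def armF {a b : ℝ} (B : BanditModel μ a b) : (ℕ ⊕ ℕ × ℕ) → Ω → ℝ :=
  Sum.elim B.means fun it => B.seeds it.1 it.2

lemma measurable_armF {a b : ℝ} (B : BanditModel μ a b) : ∀ x, Measurable (armF B x) := by
  rintro (i | ⟨i, t⟩)
  · exact B.meas_means i
  · exact B.meas_seeds i t

def armIdx (m : ℕ) (j : ℕ) : Option (Fin m) → ℕ ⊕ ℕ × ℕ :=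
  fun k => k.elim (Sum.inl j) fun t => Sum.inr (j, (t : ℕ))

lemma armIdx_inj (m j : ℕ) : Function.Injective (armIdx m j) := by
  intro k k' h
  cases k with
  | none =>
    cases k' with
    | none => rfl
    | some s => simp [armIdx] at h
  | some s =>
    cases k' with
    | none => simp [armIdx] at h
    | some s' =>
      simp only [armIdx, Option.elim, Sum.inr.injEq, Prod.mk.injEq] at h
      exact congrArg some (Fin.ext h.2)

def lab : ℕ ⊕ ℕ × ℕ → ℕ := Sum.elim id Prod.fst

lemma lab_armIdx (m j : ℕ) (k : Option (Fin m)) : lab (armIdx m j k) = j := by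
  cases k <;> rfl

noncomputable def armVec {a b : ℝ} (B : BanditModel μ a b) (m j : ℕ) :
    Ω → Option (Fin m) → ℝ :=
  fun ω k => armF B (armIdx m j k) ω

lemma measurable_armVec {a b : ℝ} (B : BanditModel μ a b) (m j : ℕ) :
    Measurable (armVec B m j) :=
  measurable_pi_lambda _ fun _k => measurable_armF B _

lemma map_armVec (B : BanditModel μ 0 1) [IsProbabilityMeasure μ] (m j : ℕ) :
    μ.map (armVec B m j) = piU m := by
  have h := map_tuple_eq_pi (μ := μ)
    (iIndepFun_precomp B.indep (armIdx_inj m j))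
    (fun k => measurable_armF B (armIdx m j k))
  have h2 : (fun k : Option (Fin m) => μ.map (armF B (armIdx m j k))) =
      fun _ => unifIcc 0 1 := by
    funext k
    cases k with
    | none => exact B.law_means j
    | some t => exact B.law_seeds j t
  calc μ.map (armVec B m j)
      = Measure.pi (fun k : Option (Fin m) => μ.map (armF B (armIdx m j k))) := h
    _ = piU m := by rw [h2]; rfl

lemma armVec_measure (B : BanditModel μ 0 1) [IsProbabilityMeasure μ] (m j : ℕ)
    {E : Set (Option (Fin m) → ℝ)} (hE : MeasurableSet E) :
    μ (armVec B m j ⁻¹' E) = piU m E := by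
  rw [← map_armVec B m j, Measure.map_apply (measurable_armVec B m j) hE]

lemma indep_step (B : BanditModel μ 0 1) (m : ℕ) (e : ℕ → ℕ)
    (he : Function.Injective e) (i : ℕ) :
    IndepFun (armVec B m (e i)) (fun ω (j : Fin i) => armVec B m (e (j : ℕ)) ω) μ := by
  classical
  set S : Finset (ℕ ⊕ ℕ × ℕ) := Finset.image (armIdx m (e i)) Finset.univ with hS
  set T : Finset (ℕ ⊕ ℕ × ℕ) :=
    (Finset.range i).biUnion (fun j => Finset.image (armIdx m (e j)) Finset.univ) with hT
  have hdisj : Disjoint S T := by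
    rw [Finset.disjoint_left]
    intro x hxS hxT
    rcases Finset.mem_image.mp hxS with ⟨k, _, rfl⟩
    rcases Finset.mem_biUnion.mp hxT with ⟨j, hj, hx⟩
    rcases Finset.mem_image.mp hx with ⟨k', _, hk'⟩
    have h1 : e j = e i := by
      have h2 := congrArg lab hk'
      rwa [lab_armIdx, lab_armIdx] at h2
    have h3 : j = i := he h1
    rw [h3] at hj
    exact absurd (Finset.mem_range.mp hj) (lt_irrefl i)
  have base := B.indep.indepFun_finset S T hdisj (measurable_armF B)
  have hmemS : ∀ k : Option (Fin m), armIdx m (e i) k ∈ S := fun k =>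
    Finset.mem_image_of_mem _ (Finset.mem_univ k)
  have hmemT : ∀ (j : Fin i) (k : Option (Fin m)), armIdx m (e (j : ℕ)) k ∈ T := fun j k =>
    Finset.mem_biUnion.mpr ⟨(j : ℕ), Finset.mem_range.mpr j.isLt,
      Finset.mem_image_of_mem _ (Finset.mem_univ k)⟩
  have hφm : Measurable (fun v : ((x : S) → ℝ) => fun k : Option (Fin m) =>
      v ⟨armIdx m (e i) k, hmemS k⟩) :=
    measurable_pi_lambda _ fun k => measurable_pi_apply _
  have hψm : Measurable (fun v : ((x : T) → ℝ) => fun (j : Fin i) (k : Option (Fin m)) =>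
      v ⟨armIdx m (e (j : ℕ)) k, hmemT j k⟩) :=
    measurable_pi_lambda _ fun j => measurable_pi_lambda _ fun k => measurable_pi_apply _
  exact base.comp hφm hψm

lemma claim_ind (B : BanditModel μ 0 1) [IsProbabilityMeasure μ] (m : ℕ) (e : ℕ → ℕ)
    (he : Function.Injective e) :
    ∀ (i : ℕ) (E : Set (Option (Fin m) → ℝ)), MeasurableSet E →
      μ (armVec B m (e i) ⁻¹' E ∩
          ⋂ j ∈ Finset.range i, armVec B m (e j) ⁻¹' (succSet m)ᶜ) =
        piU m E * (piU m (succSet m)ᶜ) ^ i := by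
  intro i
  induction i with
  | zero =>
    intro E hE
    simp only [Finset.range_zero, Finset.notMem_empty, Set.iInter_of_empty,
      Set.iInter_univ, Set.inter_univ, pow_zero, mul_one]
    exact armVec_measure B m (e 0) hE
  | succ i ih =>
    intro E hE
    have hZ : (⋂ j ∈ Finset.range (i + 1), armVec B m (e j) ⁻¹' (succSet m)ᶜ) =
        (fun ω (j : Fin (i + 1)) => armVec B m (e (j : ℕ)) ω) ⁻¹'
          {v | ∀ j : Fin (i + 1), v j ∈ (succSet m)ᶜ} := by
      ext ω
      simp only [Set.mem_iInter, Finset.mem_range, Set.mem_preimage, Set.mem_setOf_eq]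
      constructor
      · intro h j; exact h (j : ℕ) j.isLt
      · intro h j hj; exact h ⟨j, hj⟩
    have hAllMeas : MeasurableSet
        {v : Fin (i + 1) → Option (Fin m) → ℝ | ∀ j, v j ∈ (succSet m)ᶜ} := by
      have h : {v : Fin (i + 1) → Option (Fin m) → ℝ | ∀ j, v j ∈ (succSet m)ᶜ} =
          ⋂ j, (fun v : Fin (i + 1) → Option (Fin m) → ℝ => v j) ⁻¹' (succSet m)ᶜ := by
        ext v; simp
      rw [h]
      exact MeasurableSet.iInter fun j =>
        (measurable_pi_apply j) (measurableSet_succSet m).compl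
    rw [hZ, (indep_step B m e he (i + 1)).meas_inter ⟨E, hE, rfl⟩ ⟨_, hAllMeas, rfl⟩,
      armVec_measure B m (e (i + 1)) hE, ← hZ]
    have hsplit : (⋂ j ∈ Finset.range (i + 1), armVec B m (e j) ⁻¹' (succSet m)ᶜ) =
        armVec B m (e i) ⁻¹' (succSet m)ᶜ ∩
          ⋂ j ∈ Finset.range i, armVec B m (e j) ⁻¹' (succSet m)ᶜ := by
      rw [Finset.range_add_one]
      ext ω
      simp only [Set.mem_iInter, Finset.mem_insert, Finset.mem_range, Set.mem_inter_iff]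
      constructor
      · intro h
        exact ⟨h i (Or.inl rfl), fun j hj => h j (Or.inr hj)⟩
      · rintro ⟨h1, h2⟩ j hj
        rcases hj with rfl | hj
        · exact h1
        · exact h2 j hj
    rw [hsplit, ih _ (measurableSet_succSet m).compl]
    ring

lemma measurable_natCases {g : Ω → ℕ} (hg : Measurable g)
    {F : ℕ → Ω → ℕ} (hF : ∀ n, Measurable (F n)) : Measurable fun ω => F (g ω) ω := by
  apply measurable_to_countable'
  intro c
  have h : (fun ω => F (g ω) ω) ⁻¹' {c} = ⋃ n, (g ⁻¹' {n}) ∩ ((F n) ⁻¹' {c}) := by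
    ext ω
    simp only [Set.mem_preimage, Set.mem_singleton_iff, Set.mem_iUnion, Set.mem_inter_iff]
    constructor
    · intro h; exact ⟨g ω, rfl, h⟩
    · rintro ⟨n, hn, h⟩; rw [← hn] at h; exact h
  rw [h]
  exact MeasurableSet.iUnion fun n =>
    (hg (measurableSet_singleton n)).inter ((hF n) (measurableSet_singleton c))

lemma measurable_sInf' {A : ℕ → Set Ω} (hA : ∀ n, MeasurableSet (A n)) :
    Measurable fun ω => sInf {n | ω ∈ A n} := by
  apply measurable_to_countable'
  intro c
  classical
  have h : (fun ω => sInf {n | ω ∈ A n}) ⁻¹' {c} =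
      (A c ∩ ⋂ j, ⋂ _ : j < c, (A j)ᶜ) ∪ (if c = 0 then ⋂ n, (A n)ᶜ else ∅) := by
    ext ω
    simp only [Set.mem_preimage, Set.mem_singleton_iff, Set.mem_union, Set.mem_inter_iff,
      Set.mem_iInter, Set.mem_compl_iff]
    constructor
    · intro h
      by_cases hne : {n | ω ∈ A n}.Nonempty
      · left
        constructor
        · have hm := Nat.sInf_mem hne
          rw [h] at hm
          exact hm
        · intro j hj hmem
          have hle : sInf {n | ω ∈ A n} ≤ j := Nat.sInf_le hmem
          omega
      · right
        have hempty : {n | ω ∈ A n} = ∅ := Set.not_nonempty_iff_eq_empty.mp hne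
        have hc : c = 0 := by rw [← h, hempty, Nat.sInf_empty]
        rw [if_pos hc]
        exact Set.mem_iInter.mpr fun n hmem => hne ⟨n, hmem⟩
    · intro h
      rcases h with ⟨hc, hlt⟩ | h
      · refine le_antisymm (Nat.sInf_le hc) ?_
        by_contra hlt2
        push_neg at hlt2
        have hmem := Nat.sInf_mem (s := {n | ω ∈ A n}) ⟨c, hc⟩
        exact hlt _ hlt2 hmem
      · by_cases hc : c = 0
        · rw [if_pos hc] at h
          have he : {n | ω ∈ A n} = ∅ := by
            ext n
            simpa using Set.mem_iInter.mp h n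
          rw [he, Nat.sInf_empty, hc]
        · rw [if_neg hc] at h
          exact absurd h (Set.notMem_empty ω)
  rw [h]
  refine MeasurableSet.union ((hA c).inter (MeasurableSet.iInter fun j =>
    MeasurableSet.iInter fun _ => (hA j).compl)) ?_
  split_ifs
  · exact MeasurableSet.iInter fun n => (hA n).compl
  · exact MeasurableSet.empty

end BanditProof
end ArmsProofs
section MainProofs
open scoped ENNReal
namespace BanditProof

variable {Ω : Type*} [MeasurableSpace Ω] {μ : Measure Ω}

lemma main_bound (B : BanditModel μ 0 1) [IsProbabilityMeasure μ] (m : ℕ) (e : ℕ → ℕ)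
    (he : Function.Injective e) :
    Integrable (fun ω => (B.explorationPulls m e ω : ℝ)) μ ∧
    ∫ ω, (B.explorationPulls m e ω : ℝ) ∂μ ≤ (m : ℝ) / 2 * ((m : ℝ) + 1) + m := by
  classical
  set fails : ℕ → Set Ω := fun j => armVec B m (e j) ⁻¹' (succSet m)ᶜ with hfails_def
  set DD : ℕ → Fin m → Set Ω := fun i t =>
    armVec B m (e i) ⁻¹' (dSet m t) ∩ ⋂ j ∈ Finset.range i, fails j with hDD_def
  have hfails_meas : ∀ j, MeasurableSet (fails j) := fun j =>
    (measurable_armVec B m (e j)) (measurableSet_succSet m).compl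
  have hDD_meas : ∀ i t, MeasurableSet (DD i t) := fun i t =>
    ((measurable_armVec B m (e i)) (measurableSet_dSet m t)).inter
      (MeasurableSet.iInter fun j => MeasurableSet.iInter fun _ => hfails_meas j)
  have hpull_true : ∀ a t ω, B.pull a t ω = true ↔ B.seeds a t ω ≤ B.means a ω := by
    intro a t ω; simp [BanditModel.pull]
  have hpull_false : ∀ a t ω, B.pull a t ω = false ↔ ¬ B.seeds a t ω ≤ B.means a ω := by
    intro a t ω; simp [BanditModel.pull]
  have hq : piU m (succSet m) = ENNReal.ofReal (1 / ((m : ℝ) + 1)) := by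
    exact piU_succSet m
  set r : ℝ≥0∞ := piU m (succSet m)ᶜ with hr_def
  have hDDmeasure : ∀ (i : ℕ) (t : Fin m), μ (DD i t) =
      ENNReal.ofReal (1 / ((t : ℕ) + 1) - 1 / ((t : ℕ) + 2)) * r ^ i := by
    intro i t
    have h := claim_ind B m e he i (dSet m t) (measurableSet_dSet m t)
    rw [piU_dSet m t] at h
    exact h
  -- the stopping time and good-arm index
  set T : ℕ → Ω → ℕ := fun i ω => sInf {t | B.pull (e i) t ω = false} with hT_def
  set good : Ω → ℕ := fun ω => sInf {i | ∀ t < m, B.pull (e i) t ω = true} with hgood_def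
  have hexpl : ∀ ω, B.explorationPulls m e ω =
      (∑ i ∈ Finset.range (good ω), (T i ω + 1)) + m := fun ω => rfl
  -- measurability
  have hTmeas : ∀ i, Measurable (T i) := by
    intro i
    refine measurable_sInf' (A := fun n => {ω | B.pull (e i) n ω = false}) fun n => ?_
    show MeasurableSet {ω : Ω | B.pull (e i) n ω = false}
    have hset : {ω : Ω | B.pull (e i) n ω = false} =
        {ω : Ω | B.seeds (e i) n ω ≤ B.means (e i) ω}ᶜ := by
      ext ω
      simp [hpull_false]
    rw [hset]
    exact (measurableSet_le (B.meas_seeds (e i) n) (B.meas_means (e i))).compl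
  have hgoodmeas : Measurable good := by
    refine measurable_sInf' (A := fun i => {ω | ∀ t < m, B.pull (e i) t ω = true}) fun i => ?_
    show MeasurableSet {ω : Ω | ∀ t < m, B.pull (e i) t ω = true}
    have hset : {ω : Ω | ∀ t < m, B.pull (e i) t ω = true} =
        ⋂ t, ⋂ _ : t < m, {ω : Ω | B.seeds (e i) t ω ≤ B.means (e i) ω} := by
      ext ω
      simp only [Set.mem_setOf_eq, Set.mem_iInter]
      constructor
      · intro h t ht; exact (hpull_true _ _ _).mp (h t ht)
      · intro h t ht; exact (hpull_true _ _ _).mpr (h t ht)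
    rw [hset]
    exact MeasurableSet.iInter fun t => MeasurableSet.iInter fun _ =>
      measurableSet_le (B.meas_seeds (e i) t) (B.meas_means (e i))
  have hexpl_meas : Measurable fun ω => B.explorationPulls m e ω := by
    have hF : ∀ n, Measurable fun ω => (∑ i ∈ Finset.range n, (T i ω + 1)) + m := by
      intro n
      have h1 : Measurable fun ω => ∑ i ∈ Finset.range n, (T i ω + 1) :=
        Finset.measurable_sum _ fun i _ => (hTmeas i).add_const 1
      exact h1.add_const m
    have h2 : (fun ω => B.explorationPulls m e ω) =
        fun ω => (fun n ω' => (∑ i ∈ Finset.range n, (T i ω' + 1)) + m) (good ω) ω := by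
      funext ω
      exact hexpl ω
    rw [h2]
    exact measurable_natCases hgoodmeas hF
  -- pointwise domination
  set gfun : ℕ → Ω → ℝ≥0∞ := fun i ω => ∑ t : Fin m,
    Set.indicator (DD i t) (fun _ => (((t : ℕ) + 1 : ℕ) : ℝ≥0∞)) ω with hg_def
  have hpoint : ∀ ω, ((B.explorationPulls m e ω : ℕ) : ℝ≥0∞) ≤ (∑' i, gfun i ω) + m := by
    intro ω
    rw [hexpl ω]
    push_cast
    refine add_le_add_left ?_ _
    have hstep : ∀ i ∈ Finset.range (good ω), ((T i ω : ℝ≥0∞) + 1) ≤ gfun i ω := by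
      intro i hi
      have higood : i < good ω := Finset.mem_range.mp hi
      have hfails_mem : ∀ j, j ≤ i → ω ∈ fails j := by
        intro j hj
        have hnot : ¬ (∀ t < m, B.pull (e j) t ω = true) := by
          intro hyes
          have hle : good ω ≤ j := Nat.sInf_le hyes
          omega
        show armVec B m (e j) ω ∈ (succSet m)ᶜ
        intro hall
        apply hnot
        intro t ht
        rw [hpull_true]
        exact hall ⟨t, ht⟩
      have hfi := hfails_mem i le_rfl
      have hfi' : ¬ ∀ t : Fin m, B.seeds (e i) (t : ℕ) ω ≤ B.means (e i) ω := hfi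
      push_neg at hfi'
      obtain ⟨tw, htw⟩ := hfi'
      have htwf : B.pull (e i) (tw : ℕ) ω = false := (hpull_false _ _ _).mpr htw.not_ge
      have hTlt : T i ω < m := by
        have h1 : T i ω ≤ (tw : ℕ) := Nat.sInf_le htwf
        exact lt_of_le_of_lt h1 tw.isLt
      set t0 : Fin m := ⟨T i ω, hTlt⟩ with ht0_def
      have hmemD : ω ∈ DD i t0 := by
        constructor
        · show armVec B m (e i) ω ∈ dSet m t0
          constructor
          · intro s hs
            have hnotfalse : B.pull (e i) (s : ℕ) ω ≠ false := by
              intro hfalse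
              have h1 : T i ω ≤ (s : ℕ) := Nat.sInf_le hfalse
              have h2 : (s : ℕ) < T i ω := hs
              omega
            have htrue : B.pull (e i) (s : ℕ) ω = true := by
              cases hb : B.pull (e i) (s : ℕ) ω
              · exact absurd hb hnotfalse
              · rfl
            exact (hpull_true _ _ _).mp htrue
          · have hTmem : B.pull (e i) (T i ω) ω = false :=
              Nat.sInf_mem (s := {t | B.pull (e i) t ω = false}) ⟨(tw : ℕ), htwf⟩
            have h1 := (hpull_false _ _ _).mp hTmem
            exact not_le.mp h1
        · exact Set.mem_iInter.mpr fun j => Set.mem_iInter.mpr fun hj =>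
            hfails_mem j (le_of_lt (Finset.mem_range.mp hj))
      have hind : Set.indicator (DD i t0) (fun _ => (((t0 : ℕ) + 1 : ℕ) : ℝ≥0∞)) ω =
          ((T i ω : ℝ≥0∞) + 1) := by
        rw [Set.indicator_of_mem hmemD]
        push_cast
        rfl
      calc ((T i ω : ℝ≥0∞) + 1)
          = Set.indicator (DD i t0) (fun _ => (((t0 : ℕ) + 1 : ℕ) : ℝ≥0∞)) ω := hind.symm
        _ ≤ gfun i ω := Finset.single_le_sum
            (f := fun t : Fin m => Set.indicator (DD i t)
              (fun _ => (((t : ℕ) + 1 : ℕ) : ℝ≥0∞)) ω)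
            (fun t _ => zero_le) (Finset.mem_univ t0)
    calc (∑ i ∈ Finset.range (good ω), ((T i ω : ℝ≥0∞) + 1))
        ≤ ∑ i ∈ Finset.range (good ω), gfun i ω := Finset.sum_le_sum hstep
      _ ≤ ∑' i, gfun i ω := ENNReal.sum_le_tsum _
  -- lintegral computation
  have hgmeas : ∀ i, Measurable (gfun i) := fun i =>
    Finset.measurable_sum _ fun t _ => measurable_const.indicator (hDD_meas i t)
  set C : ℝ≥0∞ := ∑ t : Fin m, (((t : ℕ) + 1 : ℕ) : ℝ≥0∞) *
    ENNReal.ofReal (1 / ((t : ℕ) + 1) - 1 / ((t : ℕ) + 2)) with hC_def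
  have hlintg : ∀ i, ∫⁻ ω, gfun i ω ∂μ = C * r ^ i := by
    intro i
    have h1 : ∫⁻ ω, gfun i ω ∂μ = ∑ t : Fin m,
        ∫⁻ ω, Set.indicator (DD i t) (fun _ => (((t : ℕ) + 1 : ℕ) : ℝ≥0∞)) ω ∂μ :=
      lintegral_finset_sum _ fun t _ => measurable_const.indicator (hDD_meas i t)
    rw [h1]
    have h2 : ∀ t : Fin m,
        ∫⁻ ω, Set.indicator (DD i t) (fun _ => (((t : ℕ) + 1 : ℕ) : ℝ≥0∞)) ω ∂μ =
        ((((t : ℕ) + 1 : ℕ) : ℝ≥0∞) *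
          ENNReal.ofReal (1 / ((t : ℕ) + 1) - 1 / ((t : ℕ) + 2))) * r ^ i := by
      intro t
      rw [lintegral_indicator_const (hDD_meas i t), hDDmeasure i t, mul_assoc]
    rw [Finset.sum_congr rfl fun t _ => h2 t, ← Finset.sum_mul]
  have hC : C ≤ ENNReal.ofReal ((m : ℝ) / 2) := by
    have hterm : ∀ t : Fin m, (((t : ℕ) + 1 : ℕ) : ℝ≥0∞) *
        ENNReal.ofReal (1 / ((t : ℕ) + 1) - 1 / ((t : ℕ) + 2)) ≤
        ENNReal.ofReal (1 / 2 : ℝ) := by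
      intro t
      have hcast : (((t : ℕ) + 1 : ℕ) : ℝ≥0∞) = ENNReal.ofReal (((t : ℕ) : ℝ) + 1) := by
        rw [← ENNReal.ofReal_natCast ((t : ℕ) + 1)]
        congr 1
        push_cast
        ring
      rw [hcast, ← ENNReal.ofReal_mul (by positivity)]
      apply ENNReal.ofReal_le_ofReal
      set A : ℝ := ((t : ℕ) : ℝ) with hA_def
      have hA : 0 ≤ A := Nat.cast_nonneg _
      have h1 : 1 / (A + 1) - 1 / (A + 2) = 1 / ((A + 1) * (A + 2)) := by
        rw [div_sub_div _ _ (by linarith : A + 1 ≠ 0) (by linarith : A + 2 ≠ 0)]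
        ring_nf
      have h2 : (A + 1) * (1 / ((A + 1) * (A + 2))) = 1 / (A + 2) := by
        field_simp
      rw [h1, h2]
      rw [div_le_div_iff₀ (by linarith) (by norm_num)]
      linarith
    calc C ≤ ∑ _t : Fin m, ENNReal.ofReal (1 / 2 : ℝ) := Finset.sum_le_sum fun t _ => hterm t
      _ = (m : ℝ≥0∞) * ENNReal.ofReal (1 / 2 : ℝ) := by
          rw [Finset.sum_const, Finset.card_univ, Fintype.card_fin, nsmul_eq_mul]
      _ = ENNReal.ofReal ((m : ℝ) / 2) := by
          rw [← ENNReal.ofReal_natCast m, ← ENNReal.ofReal_mul (Nat.cast_nonneg m),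
            mul_one_div]
  have hgeom : (∑' i : ℕ, r ^ i) = ENNReal.ofReal ((m : ℝ) + 1) := by
    have hrr : r = 1 - piU m (succSet m) := by
      rw [hr_def, measure_compl (measurableSet_succSet m) (measure_ne_top _ _), measure_univ]
    have h1r : (1 : ℝ≥0∞) - r = piU m (succSet m) := by
      rw [hrr, ENNReal.sub_sub_cancel ENNReal.one_ne_top prob_le_one]
    rw [ENNReal.tsum_geometric, h1r, hq, one_div,
      ENNReal.ofReal_inv_of_pos (by positivity), inv_inv]
  have hlin : ∫⁻ ω, ((B.explorationPulls m e ω : ℕ) : ℝ≥0∞) ∂μ ≤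
      ENNReal.ofReal ((m : ℝ) / 2 * ((m : ℝ) + 1) + m) := by
    calc ∫⁻ ω, ((B.explorationPulls m e ω : ℕ) : ℝ≥0∞) ∂μ
        ≤ ∫⁻ ω, ((∑' i, gfun i ω) + m) ∂μ := lintegral_mono hpoint
      _ = (∫⁻ ω, (∑' i, gfun i ω) ∂μ) + (m : ℝ≥0∞) * μ Set.univ :=
          by rw [lintegral_add_right _ measurable_const, lintegral_const]
      _ = (∑' i, ∫⁻ ω, gfun i ω ∂μ) + (m : ℝ≥0∞) := by
          rw [measure_univ, mul_one, lintegral_tsum fun i => (hgmeas i).aemeasurable]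
      _ = C * (∑' i : ℕ, r ^ i) + (m : ℝ≥0∞) := by
          rw [← ENNReal.tsum_mul_left]
          congr 1
          exact tsum_congr fun i => hlintg i
      _ ≤ ENNReal.ofReal ((m : ℝ) / 2) * ENNReal.ofReal ((m : ℝ) + 1) +
            ENNReal.ofReal (m : ℝ) := by
          rw [hgeom, ENNReal.ofReal_natCast]
          exact add_le_add (mul_le_mul_left hC _) le_rfl
      _ = ENNReal.ofReal ((m : ℝ) / 2 * ((m : ℝ) + 1) + m) := by
          rw [← ENNReal.ofReal_mul (by positivity), ← ENNReal.ofReal_add (by positivity)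
            (Nat.cast_nonneg m)]
  -- conclusion
  have hreal_meas : Measurable fun ω => (B.explorationPulls m e ω : ℝ) :=
    measurable_from_top.comp hexpl_meas
  have hofreal : ∀ ω, ENNReal.ofReal ((B.explorationPulls m e ω : ℝ)) =
      ((B.explorationPulls m e ω : ℕ) : ℝ≥0∞) := fun ω => ENNReal.ofReal_natCast _
  have hfin : HasFiniteIntegral (fun ω => (B.explorationPulls m e ω : ℝ)) μ := by
    show (∫⁻ ω, (‖(B.explorationPulls m e ω : ℝ)‖₊ : ℝ≥0∞) ∂μ) < ⊤
    have hcongr : ∀ ω, (‖(B.explorationPulls m e ω : ℝ)‖₊ : ℝ≥0∞) =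
        ((B.explorationPulls m e ω : ℕ) : ℝ≥0∞) := by
      intro ω
      rw [← enorm_eq_nnnorm, ← ofReal_norm, Real.norm_of_nonneg (Nat.cast_nonneg _), hofreal ω]
    rw [lintegral_congr hcongr]
    exact lt_of_le_of_lt hlin ENNReal.ofReal_lt_top
  have hInt : Integrable (fun ω => (B.explorationPulls m e ω : ℝ)) μ :=
    ⟨hreal_meas.aestronglyMeasurable, hfin⟩
  refine ⟨hInt, ?_⟩
  rw [integral_eq_lintegral_of_nonneg_ae (ae_of_all _ fun ω => Nat.cast_nonneg _)
    hreal_meas.aestronglyMeasurable]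
  have hlin' : (∫⁻ ω, ENNReal.ofReal ((B.explorationPulls m e ω : ℝ)) ∂μ) ≤
      ENNReal.ofReal ((m : ℝ) / 2 * ((m : ℝ) + 1) + m) := by
    rw [lintegral_congr hofreal]
    exact hlin
  calc (∫⁻ ω, ENNReal.ofReal ((B.explorationPulls m e ω : ℝ)) ∂μ).toReal
      ≤ (ENNReal.ofReal ((m : ℝ) / 2 * ((m : ℝ) + 1) + m)).toReal :=
        ENNReal.toReal_mono ENNReal.ofReal_ne_top hlin'
    _ = (m : ℝ) / 2 * ((m : ℝ) + 1) + m := ENNReal.toReal_ofReal (by positivity)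

end BanditProof
end MainProofs
/-- In the infinite-armed Bernoulli bandit model with arm means drawn
i.i.d. from the uniform distribution on `[0, 1]`, consider one super-round of 1-failure
`m`-run exploration with `m = √n` (`n` a perfect square): fresh arms are pulled in turn,
each arm abandoned at its first failure, and exploration ends as soon as some arm produces
`m` consecutive successes.  For all sufficiently large `n`, the expected total number of
pulls performed during exploration in the super-round is at most `n - √n`; hence over `k`
such super-rounds (each using its own fresh arms) the expected total number of exploration
pulls is at most `k * (n - √n)`, i.e. the exploration over `k` super-rounds amounts to at
most `k * (n - √n) / n` full sequential passes of length `n`. -/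
theorem explorationPulls_expected_bound
    {Ω : Type*} [MeasurableSpace Ω] (μ : Measure Ω) [IsProbabilityMeasure μ]
    (B : BanditModel μ 0 1) :
    ∃ n₀ : ℕ, ∀ m n : ℕ, n = m ^ 2 → n₀ ≤ n →
      ((∫ ω, (B.explorationPulls m (fun i => Nat.pair 0 i) ω : ℝ) ∂μ)
          ≤ (n : ℝ) - Real.sqrt n) ∧
      (∀ k : ℕ,
        (∫ ω, (∑ j ∈ Finset.range k,
            (B.explorationPulls m (fun i => Nat.pair j i) ω : ℝ)) ∂μ)
          ≤ (k : ℝ) * ((n : ℝ) - Real.sqrt n)) ∧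
      (∀ k : ℕ,
        (∫ ω, (∑ j ∈ Finset.range k,
            (B.explorationPulls m (fun i => Nat.pair j i) ω : ℝ)) ∂μ) / n
          ≤ (k : ℝ) * ((n : ℝ) - Real.sqrt n) / n) := by
  refine ⟨25, fun m n hn hn0 => ?_⟩
  have hm5 : 5 ≤ m := by
    by_contra hlt
    push_neg at hlt
    have h16 : m ^ 2 ≤ 16 := by
      have : m ≤ 4 := by omega
      calc m ^ 2 ≤ 4 ^ 2 := Nat.pow_le_pow_left this 2
        _ = 16 := by norm_num
    omega
  have hmR : (5 : ℝ) ≤ (m : ℝ) := by exact_mod_cast hm5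
  have hsqrt : Real.sqrt n = (m : ℝ) := by
    subst hn
    rw [Nat.cast_pow]
    exact Real.sqrt_sq (Nat.cast_nonneg m)
  have hnm : (n : ℝ) = (m : ℝ) ^ 2 := by subst hn; push_cast; ring
  have hbound : (m : ℝ) / 2 * ((m : ℝ) + 1) + m ≤ (n : ℝ) - Real.sqrt n := by
    rw [hsqrt, hnm]
    nlinarith
  have key : ∀ j : ℕ,
      Integrable (fun ω => (B.explorationPulls m (fun i => Nat.pair j i) ω : ℝ)) μ ∧
      ∫ ω, (B.explorationPulls m (fun i => Nat.pair j i) ω : ℝ) ∂μ ≤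
        (n : ℝ) - Real.sqrt n := by
    intro j
    have hinj : Function.Injective (fun i => Nat.pair j i) := fun x y h =>
      (Nat.pair_eq_pair.mp h).2
    obtain ⟨h1, h2⟩ := BanditProof.main_bound B m _ hinj
    exact ⟨h1, h2.trans hbound⟩
  have hpart2 : ∀ k : ℕ,
      (∫ ω, (∑ j ∈ Finset.range k,
          (B.explorationPulls m (fun i => Nat.pair j i) ω : ℝ)) ∂μ)
        ≤ (k : ℝ) * ((n : ℝ) - Real.sqrt n) := by
    intro k
    rw [integral_finset_sum _ fun j _ => (key j).1]
    calc (∑ j ∈ Finset.range k,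
          ∫ ω, (B.explorationPulls m (fun i => Nat.pair j i) ω : ℝ) ∂μ)
        ≤ ∑ _j ∈ Finset.range k, ((n : ℝ) - Real.sqrt n) :=
          Finset.sum_le_sum fun j _ => (key j).2
      _ = (k : ℝ) * ((n : ℝ) - Real.sqrt n) := by
          rw [Finset.sum_const, Finset.card_range, nsmul_eq_mul]
  refine ⟨(key 0).2, hpart2, fun k => ?_⟩
  have hnpos : (0 : ℝ) ≤ (n : ℝ) := Nat.cast_nonneg n
  gcongr
  exact hpart2 k
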